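/- arXiv:2007.01170 — 8 statements merged into one kernel-verified Lean document; each statement's English description precedes it below -/
import Mathlib

section
/- For the extended n-body system ṙᵢ = vᵢ, mᵢ v̇ᵢ = ∑_{j≠i} γ mᵢ mⱼ (rⱼ − rᵢ)/r_{ij}³, ṙ_{ij} = (1/r_{ij}) ⟨rᵢ − rⱼ, vᵢ − vⱼ⟩ with r_{ij} = r_{ji} nonvanishing, the energy ∑ᵢ (mᵢ/2)‖vᵢ‖² − γ ∑_{i<j} mᵢ mⱼ / r_{ij} is constant in time. -/
lemma pairsum {n : ℕ} (F : Fin n → Fin n → ℝ) :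
    ∑ i, ∑ j ∈ Finset.univ.erase i, F i j
      = ∑ i, ∑ j ∈ Finset.univ.filter (fun j => i < j), (F i j + F j i) := by
  have hsplit : ∀ i : Fin n, Finset.univ.erase i =
      Finset.univ.filter (fun j => i < j) ∪ Finset.univ.filter (fun j => j < i) := by
    intro i; ext j
    simp only [Finset.mem_erase, Finset.mem_union, Finset.mem_filter, Finset.mem_univ,
      true_and, and_true, ne_iff_lt_or_gt]
    tauto
  have hdisj : ∀ i : Fin n,
      Disjoint (Finset.univ.filter (fun j => i < j)) (Finset.univ.filter (fun j => j < i)) := by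
    intro i
    rw [Finset.disjoint_filter]
    exact fun j _ h1 h2 => absurd h2 (not_lt_of_gt h1)
  calc ∑ i, ∑ j ∈ Finset.univ.erase i, F i j
      = ∑ i, ((∑ j ∈ Finset.univ.filter (fun j => i < j), F i j)
            + ∑ j ∈ Finset.univ.filter (fun j => j < i), F i j) := by
        refine Finset.sum_congr rfl fun i _ => ?_
        rw [hsplit i, Finset.sum_union (hdisj i)]
    _ = (∑ i, ∑ j ∈ Finset.univ.filter (fun j => i < j), F i j)
        + ∑ i, ∑ j ∈ Finset.univ.filter (fun j => j < i), F i j := by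
        rw [Finset.sum_add_distrib]
    _ = (∑ i, ∑ j ∈ Finset.univ.filter (fun j => i < j), F i j)
        + ∑ i, ∑ j ∈ Finset.univ.filter (fun j => i < j), F j i := by
        congr 1
        exact Finset.sum_comm' (by intro x y; simp)
    _ = ∑ i, ∑ j ∈ Finset.univ.filter (fun j => i < j), (F i j + F j i) := by
        rw [← Finset.sum_add_distrib]
        exact Finset.sum_congr rfl fun i _ => (Finset.sum_add_distrib).symm

/-- For the extended (rationalized) n-body system, the energy
`∑ᵢ (mᵢ/2)‖vᵢ‖² − γ ∑_{i<j} mᵢ mⱼ / R i j` is constant in time. -/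
theorem stmt7 (n : ℕ) (γ : ℝ) (hγ : 0 < γ)
    (m : Fin n → ℝ) (hm : ∀ i, 0 < m i)
    (r v a : Fin n → ℝ → EuclideanSpace ℝ (Fin 3))
    (R : Fin n → Fin n → ℝ → ℝ)
    (hRsymm : ∀ i j, R i j = R j i)
    (hR0 : ∀ i j, i ≠ j → ∀ t, R i j t ≠ 0)
    (hrv : ∀ i t, HasDerivAt (r i) (v i t) t)
    (hva : ∀ i t, HasDerivAt (v i) (a i t) t)
    (hforce : ∀ i t, m i • a i t =
      ∑ j ∈ Finset.univ.erase i, ((γ * m i * m j) / (R i j t) ^ 3) • (r j t - r i t))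
    (hdR : ∀ i j, i ≠ j → ∀ t, HasDerivAt (R i j)
      ((1 / R i j t) * (inner ℝ (r i t - r j t) (v i t - v j t) : ℝ)) t) :
    ∀ s t : ℝ,
      (∑ i, (m i / 2) * ‖v i s‖ ^ 2)
        - γ * ∑ i, ∑ j ∈ Finset.univ.filter (fun j => i < j), m i * m j / R i j s
      = (∑ i, (m i / 2) * ‖v i t‖ ^ 2)
        - γ * ∑ i, ∑ j ∈ Finset.univ.filter (fun j => i < j), m i * m j / R i j t := by
  have key : ∀ t : ℝ, HasDerivAt (fun u =>
      (∑ i, (m i / 2) * ‖v i u‖ ^ 2)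
        - γ * ∑ i, ∑ j ∈ Finset.univ.filter (fun j => i < j), m i * m j / R i j u) 0 t := by
    intro t
    have hK : HasDerivAt (fun u => ∑ i, (m i / 2) * ‖v i u‖ ^ 2)
        (∑ i, m i * (inner ℝ (v i t) (a i t) : ℝ)) t := by
      apply HasDerivAt.fun_sum
      intro i _
      have h1 : HasDerivAt (fun u => (inner ℝ (v i u) (v i u) : ℝ))
          ((inner ℝ (v i t) (a i t) : ℝ) + (inner ℝ (a i t) (v i t) : ℝ)) t :=
        (hva i t).inner ℝ (hva i t)
      have h2 := h1.const_mul (m i / 2)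
      have heq : (fun u => (m i / 2) * ‖v i u‖ ^ 2)
          = fun u => (m i / 2) * (inner ℝ (v i u) (v i u) : ℝ) := by
        funext u; rw [real_inner_self_eq_norm_sq]
      rw [heq]
      convert h2 using 1
      case e'_4 => rfl
      rw [real_inner_comm (a i t) (v i t)]; ring
    have hP : HasDerivAt
        (fun u => ∑ i, ∑ j ∈ Finset.univ.filter (fun j => i < j), m i * m j / R i j u)
        (∑ i, ∑ j ∈ Finset.univ.filter (fun j => i < j),
          m i * m j * (-((1 / R i j t) * (inner ℝ (r i t - r j t) (v i t - v j t) : ℝ))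
            / (R i j t) ^ 2)) t := by
      apply HasDerivAt.fun_sum; intro i _
      apply HasDerivAt.fun_sum; intro j hj
      have hij : i ≠ j := by
        simp only [Finset.mem_filter] at hj; exact ne_of_lt hj.2
      have h1 := ((hdR i j hij t).inv (hR0 i j hij t)).const_mul (m i * m j)
      have heq : (fun u => m i * m j / R i j u) = fun u => m i * m j * (R i j u)⁻¹ := by
        funext u; rw [div_eq_mul_inv]
      rw [heq]; exact h1
    have hD := hK.sub (hP.const_mul γ)
    convert hD using 1
    case e'_4 => rfl
    case e'_5 => rfl
    case e'_8 => rfl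
    -- show the total derivative is zero
    have hstep : ∀ i, m i * (inner ℝ (v i t) (a i t) : ℝ)
        = ∑ j ∈ Finset.univ.erase i,
            (γ * m i * m j / (R i j t) ^ 3) * (inner ℝ (v i t) (r j t - r i t) : ℝ) := by
      intro i
      have h := congrArg (fun w => (inner ℝ (v i t) w : ℝ)) (hforce i t)
      simp only [inner_sum, real_inner_smul_right] at h
      exact h
    rw [show (∑ i, m i * (inner ℝ (v i t) (a i t) : ℝ))
        = ∑ i, ∑ j ∈ Finset.univ.erase i,
            (γ * m i * m j / (R i j t) ^ 3) * (inner ℝ (v i t) (r j t - r i t) : ℝ) from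
      Finset.sum_congr rfl fun i _ => hstep i]
    rw [pairsum, Finset.mul_sum, ← Finset.sum_sub_distrib]
    rw [eq_comm, Finset.sum_eq_zero]
    intro i _
    rw [Finset.mul_sum, ← Finset.sum_sub_distrib]
    apply Finset.sum_eq_zero
    intro j hj
    have hij : i ≠ j := by
      simp only [Finset.mem_filter] at hj; exact ne_of_lt hj.2
    have hRji : R j i t = R i j t := by rw [hRsymm]
    have hc : R i j t ≠ 0 := hR0 i j hij t
    rw [hRji]
    simp only [inner_sub_left, inner_sub_right]
    rw [real_inner_comm (r i t) (v i t), real_inner_comm (r i t) (v j t),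
      real_inner_comm (r j t) (v i t), real_inner_comm (r j t) (v j t)]
    field_simp
    ring
  intro s t
  exact is_const_of_deriv_eq_zero (fun x => (key x).differentiableAt)
    (fun x => (key x).deriv) s t
end

section
/- For the fully extended n-body system ṙᵢ = vᵢ, mᵢ v̇ᵢ = ∑_{j≠i} γ mᵢ mⱼ ρ_{ij} (rⱼ − rᵢ)/r_{ij}², ṙ_{ij} = (1/r_{ij}) ⟨rᵢ − rⱼ, vᵢ − vⱼ⟩, ρ̇_{ij} = −(ρ_{ij}/r_{ij}²) ⟨rᵢ − rⱼ, vᵢ − vⱼ⟩ with r_{ij} = r_{ji}, ρ_{ij} = ρ_{ji} and r_{ij} nonvanishing, the quadratic energy ∑ᵢ (mᵢ/2)‖vᵢ‖² − γ ∑_{i<j} mᵢ mⱼ ρ_{ij} is constant in time. -/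
open Finset

/-- For the fully extended n-body system, the quadratic energy
`∑ᵢ (mᵢ/2)‖vᵢ‖² − γ ∑_{i<j} mᵢ mⱼ ρᵢⱼ` is constant in time. -/
theorem stmt9 (n : ℕ) (γ : ℝ) (hγ : 0 < γ)
    (m : Fin n → ℝ) (hm : ∀ i, 0 < m i)
    (r v a : Fin n → ℝ → EuclideanSpace ℝ (Fin 3))
    (R P : Fin n → Fin n → ℝ → ℝ)
    (hRsymm : ∀ i j, R i j = R j i) (hPsymm : ∀ i j, P i j = P j i)
    (hR0 : ∀ i j, i ≠ j → ∀ t, R i j t ≠ 0)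
    (hrv : ∀ i t, HasDerivAt (r i) (v i t) t)
    (hva : ∀ i t, HasDerivAt (v i) (a i t) t)
    (hforce : ∀ i t, m i • a i t =
      ∑ j ∈ Finset.univ.erase i, ((γ * m i * m j * P i j t) / (R i j t) ^ 2) • (r j t - r i t))
    (hdR : ∀ i j, i ≠ j → ∀ t, HasDerivAt (R i j)
      ((1 / R i j t) * (inner ℝ (r i t - r j t) (v i t - v j t) : ℝ)) t)
    (hdP : ∀ i j, i ≠ j → ∀ t, HasDerivAt (P i j)
      (-(P i j t / (R i j t) ^ 2) * (inner ℝ (r i t - r j t) (v i t - v j t) : ℝ)) t) :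
    ∀ s t : ℝ,
      (∑ i, (m i / 2) * ‖v i s‖ ^ 2)
        - γ * ∑ i, ∑ j ∈ Finset.univ.filter (fun j => i < j), m i * m j * P i j s
      = (∑ i, (m i / 2) * ‖v i t‖ ^ 2)
        - γ * ∑ i, ∑ j ∈ Finset.univ.filter (fun j => i < j), m i * m j * P i j t := by
  set E : ℝ → ℝ := fun t =>
    (∑ i, (m i / 2) * ‖v i t‖ ^ 2)
      - γ * ∑ i, ∑ j ∈ Finset.univ.filter (fun j => i < j), m i * m j * P i j t with hEdef
  show ∀ s t, E s = E t
  have hE0 : ∀ t, HasDerivAt E 0 t := by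
    intro t
    -- kinetic derivative
    have hK : HasDerivAt (fun s => ∑ i, (m i / 2) * ‖v i s‖ ^ 2)
        (∑ i, (m i / 2) * ((inner ℝ (v i t) (a i t) : ℝ) + (inner ℝ (a i t) (v i t) : ℝ))) t := by
      apply HasDerivAt.fun_sum
      intro i _
      have h1 : (fun s => (m i / 2) * ‖v i s‖ ^ 2)
          = fun s => (m i / 2) * (inner ℝ (v i s) (v i s) : ℝ) := by
        funext s; rw [real_inner_self_eq_norm_sq]
      rw [h1]
      exact ((hva i t).inner ℝ (hva i t)).const_mul _
    -- potential derivative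
    have hU : HasDerivAt (fun s => γ * ∑ i, ∑ j ∈ Finset.univ.filter (fun j => i < j),
          m i * m j * P i j s)
        (γ * ∑ i, ∑ j ∈ Finset.univ.filter (fun j => i < j),
          m i * m j * (-(P i j t / (R i j t) ^ 2) *
            (inner ℝ (r i t - r j t) (v i t - v j t) : ℝ))) t := by
      apply HasDerivAt.const_mul
      apply HasDerivAt.fun_sum
      intro i _
      apply HasDerivAt.fun_sum
      intro j hj
      have hij : i ≠ j := (Finset.mem_filter.mp hj).2.ne
      exact (hdP i j hij t).const_mul _
    have hE : HasDerivAt E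
        ((∑ i, (m i / 2) * ((inner ℝ (v i t) (a i t) : ℝ) + (inner ℝ (a i t) (v i t) : ℝ)))
          - γ * ∑ i, ∑ j ∈ Finset.univ.filter (fun j => i < j),
              m i * m j * (-(P i j t / (R i j t) ^ 2) *
                (inner ℝ (r i t - r j t) (v i t - v j t) : ℝ))) t := hK.sub hU
    -- now show the derivative value is 0
    convert hE using 1
    symm
    rw [sub_eq_zero]
    -- kinetic part rewriting
    have step1 : ∀ i, (m i / 2) * ((inner ℝ (v i t) (a i t) : ℝ) + (inner ℝ (a i t) (v i t) : ℝ))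
        = (inner ℝ (v i t) (m i • a i t) : ℝ) := by
      intro i
      rw [real_inner_smul_right, real_inner_comm (a i t) (v i t)]
      ring
    have step2 : ∀ i, (inner ℝ (v i t) (m i • a i t) : ℝ)
        = ∑ j ∈ Finset.univ.erase i,
            ((γ * m i * m j * P i j t) / (R i j t) ^ 2) * (inner ℝ (v i t) (r j t - r i t) : ℝ) := by
      intro i
      rw [hforce i t, inner_sum]
      exact Finset.sum_congr rfl fun j _ => real_inner_smul_right _ _ _
    set F : Fin n → Fin n → ℝ := fun i j =>
      ((γ * m i * m j * P i j t) / (R i j t) ^ 2) * (inner ℝ (v i t) (r j t - r i t) : ℝ) with hF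
    calc (∑ i, (m i / 2) * ((inner ℝ (v i t) (a i t) : ℝ) + (inner ℝ (a i t) (v i t) : ℝ)))
        = ∑ i, ∑ j ∈ Finset.univ.erase i, F i j := by
          refine Finset.sum_congr rfl fun i _ => ?_
          rw [step1 i, step2 i]
      _ = ∑ i, ∑ j ∈ Finset.univ.filter (fun j => i < j), (F i j + F j i) := by
          have split : ∀ i : Fin n, ∑ j ∈ Finset.univ.erase i, F i j
              = (∑ j, if i < j then F i j else 0)
                + ∑ j, if j < i then F i j else 0 := by
            intro i
            rw [← Finset.filter_ne' Finset.univ i, Finset.sum_filter, ← Finset.sum_add_distrib]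
            refine Finset.sum_congr rfl fun j _ => ?_
            rcases lt_trichotomy i j with h | h | h
            · simp [h, h.ne', asymm h]
            · simp [h]
            · simp [h, h.ne, asymm h]
          have swap : ∑ i, ∑ j, (if j < i then F i j else (0:ℝ))
              = ∑ i, ∑ j, if i < j then F j i else 0 := Finset.sum_comm
          calc ∑ i, ∑ j ∈ Finset.univ.erase i, F i j
              = (∑ i, ∑ j, if i < j then F i j else 0)
                + ∑ i, ∑ j, if j < i then F i j else (0:ℝ) := by
                rw [← Finset.sum_add_distrib]; exact Finset.sum_congr rfl fun i _ => split i
            _ = ∑ i, ∑ j, if i < j then F i j + F j i else 0 := by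
                rw [swap, ← Finset.sum_add_distrib]
                refine Finset.sum_congr rfl fun i _ => ?_
                rw [← Finset.sum_add_distrib]
                refine Finset.sum_congr rfl fun j _ => ?_
                by_cases h : i < j <;> simp [h]
            _ = ∑ i, ∑ j ∈ Finset.univ.filter (fun j => i < j), (F i j + F j i) := by
                exact Finset.sum_congr rfl fun i _ => (Finset.sum_filter _ _).symm
      _ = γ * ∑ i, ∑ j ∈ Finset.univ.filter (fun j => i < j),
              m i * m j * (-(P i j t / (R i j t) ^ 2) *
                (inner ℝ (r i t - r j t) (v i t - v j t) : ℝ)) := by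
          rw [Finset.mul_sum]
          refine Finset.sum_congr rfl fun i _ => ?_
          rw [Finset.mul_sum]
          refine Finset.sum_congr rfl fun j hj => ?_
          have hij : i ≠ j := (Finset.mem_filter.mp hj).2.ne
          simp only [hF]
          rw [hRsymm j i, hPsymm j i]
          simp only [inner_sub_left, inner_sub_right, real_inner_comm (r i t) (v j t),
            real_inner_comm (r j t) (v j t), real_inner_comm (r i t) (v i t),
            real_inner_comm (r j t) (v i t)]
          ring
  intro s t
  rcases eq_or_ne s t with rfl | hst
  · rfl
  · have : Differentiable ℝ E := fun x => (hE0 x).differentiableAt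
    exact is_const_of_deriv_eq_zero this (fun x => (hE0 x).deriv) s t
end

section
/- If a solution of the fully extended n-body system satisfies at time t₀ the constraints r_{ij}(t₀)² = ‖rᵢ(t₀) − rⱼ(t₀)‖², r_{ij}(t₀) = ‖rᵢ(t₀) − rⱼ(t₀)‖ > 0, and r_{ij}(t₀) ρ_{ij}(t₀) = 1 for all i ≠ j, and r_{ij}(t) > 0 for all t, then these constraints hold for all time t, and consequently (rᵢ, vᵢ) solves the original n-body problem mᵢ r̈ᵢ = ∑_{j≠i} γ mᵢ mⱼ (rⱼ − rᵢ)/‖rⱼ − rᵢ‖³. -/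
/-- If a solution of the fully extended n-body system satisfies at time `t₀` the constraints
`R i j t₀ = ‖rᵢ(t₀) − rⱼ(t₀)‖ > 0` and `R i j t₀ * ρ i j t₀ = 1` for all `i ≠ j`, and
`R i j t > 0` for all `t`, then the constraints hold for all time, and `(rᵢ, vᵢ)` solves
the original n-body problem. -/
theorem stmt11 (n : ℕ) (γ : ℝ) (hγ : 0 < γ) (t₀ : ℝ)
    (m : Fin n → ℝ) (hm : ∀ i, 0 < m i)
    (r v a : Fin n → ℝ → EuclideanSpace ℝ (Fin 3))
    (R P : Fin n → Fin n → ℝ → ℝ)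
    (hRsymm : ∀ i j, R i j = R j i) (hPsymm : ∀ i j, P i j = P j i)
    (hR0 : ∀ i j, i ≠ j → ∀ t, R i j t ≠ 0)
    (hrv : ∀ i t, HasDerivAt (r i) (v i t) t)
    (hva : ∀ i t, HasDerivAt (v i) (a i t) t)
    (hforce : ∀ i t, m i • a i t =
      ∑ j ∈ Finset.univ.erase i, ((γ * m i * m j * P i j t) / (R i j t) ^ 2) • (r j t - r i t))
    (hdR : ∀ i j, i ≠ j → ∀ t, HasDerivAt (R i j)
      ((1 / R i j t) * (inner ℝ (r i t - r j t) (v i t - v j t) : ℝ)) t)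
    (hdP : ∀ i j, i ≠ j → ∀ t, HasDerivAt (P i j)
      (-(P i j t / (R i j t) ^ 2) * (inner ℝ (r i t - r j t) (v i t - v j t) : ℝ)) t)
    (hRpos : ∀ i j, i ≠ j → ∀ t, 0 < R i j t)
    (hinit : ∀ i j, i ≠ j →
      R i j t₀ = ‖r i t₀ - r j t₀‖ ∧ 0 < R i j t₀ ∧ R i j t₀ * P i j t₀ = 1) :
    (∀ i j, i ≠ j → ∀ t, R i j t = ‖r i t - r j t‖ ∧ R i j t * P i j t = 1) ∧
    (∀ i t, m i • a i t =
      ∑ j ∈ Finset.univ.erase i,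
        ((γ * m i * m j) / ‖r j t - r i t‖ ^ 3) • (r j t - r i t)) := by
  have key : ∀ i j, i ≠ j → ∀ t, R i j t = ‖r i t - r j t‖ ∧ R i j t * P i j t = 1 := by
    intro i j hij t
    have hd : ∀ s : ℝ, HasDerivAt (fun u => r i u - r j u) (v i s - v j s) s :=
      fun s => (hrv i s).sub (hrv j s)
    have hinner : ∀ s : ℝ, HasDerivAt
        (fun u => (inner ℝ (r i u - r j u) (r i u - r j u) : ℝ))
        (2 * (inner ℝ (r i s - r j s) (v i s - v j s) : ℝ)) s := by
      intro s
      have h := (hd s).inner ℝ (hd s)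
      refine h.congr_deriv ?_
      rw [real_inner_comm (r i s - r j s) (v i s - v j s)]
      ring
    have hF : ∀ s : ℝ, HasDerivAt
        (fun u => (R i j u) ^ 2 - (inner ℝ (r i u - r j u) (r i u - r j u) : ℝ)) 0 s := by
      intro s
      have h := ((hdR i j hij s).pow 2).sub (hinner s)
      refine h.congr_deriv ?_
      have hR := hR0 i j hij s
      field_simp
      ring
    have hG : ∀ s : ℝ, HasDerivAt (fun u => R i j u * P i j u) 0 s := by
      intro s
      have h := (hdR i j hij s).mul (hdP i j hij s)
      refine h.congr_deriv ?_
      have hR := hR0 i j hij s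
      field_simp
      ring
    have hFc : (fun u => (R i j u) ^ 2 - (inner ℝ (r i u - r j u) (r i u - r j u) : ℝ)) t
        = (fun u => (R i j u) ^ 2 - (inner ℝ (r i u - r j u) (r i u - r j u) : ℝ)) t₀ :=
      is_const_of_deriv_eq_zero (fun s => (hF s).differentiableAt)
        (fun s => (hF s).deriv) t t₀
    have hGc : (fun u => R i j u * P i j u) t = (fun u => R i j u * P i j u) t₀ :=
      is_const_of_deriv_eq_zero (fun s => (hG s).differentiableAt)
        (fun s => (hG s).deriv) t t₀
    obtain ⟨h1, h2, h3⟩ := hinit i j hij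
    simp only at hFc hGc
    constructor
    · have hsq : (R i j t) ^ 2 = ‖r i t - r j t‖ ^ 2 := by
        rw [← real_inner_self_eq_norm_sq]
        have : (R i j t₀) ^ 2 - (inner ℝ (r i t₀ - r j t₀) (r i t₀ - r j t₀) : ℝ) = 0 := by
          rw [real_inner_self_eq_norm_sq, h1]; ring
        linarith [hFc, this]
      have hpos := hRpos i j hij t
      have hnn : (0:ℝ) ≤ ‖r i t - r j t‖ := norm_nonneg _
      nlinarith [hsq, hpos, hnn]
    · rw [hGc, h3]
  refine ⟨key, fun i t => ?_⟩
  rw [hforce i t]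
  refine Finset.sum_congr rfl fun j hj => ?_
  have hij : i ≠ j := (Finset.ne_of_mem_erase hj).symm
  obtain ⟨h1, h2⟩ := key i j hij t
  have hR := hR0 i j hij t
  have hnr : ‖r j t - r i t‖ = R i j t := by rw [h1, norm_sub_rev]
  have hP : P i j t = 1 / R i j t := by field_simp; linarith [h2]
  rw [hnr, hP]
  have hsc : γ * m i * m j * (1 / R i j t) / R i j t ^ 2 = γ * m i * m j / R i j t ^ 3 := by
    rw [mul_one_div, div_div, ← pow_succ']
  rw [hsc]
end

section
/- Let f : ℝⁿ → ℝⁿ and let x, x̂ ∈ ℝⁿ satisfy the midpoint scheme x̂ − x = f((x̂ + x)/2) · Δt. If g(y) = B(y, y) is a quadratic form with symmetric bilinear form B satisfying B(y, f(y)) = 0 for all y, then g(x̂) = g(x). -/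
/-- The midpoint scheme preserves any quadratic form `g y = B y y` whose symmetric
bilinear form `B` satisfies `B y (f y) = 0` for all `y`. -/
theorem stmt12 {n : ℕ} (f : (Fin n → ℝ) → (Fin n → ℝ))
    (B : (Fin n → ℝ) →ₗ[ℝ] (Fin n → ℝ) →ₗ[ℝ] ℝ)
    (hsymm : ∀ a b, B a b = B b a)
    (horth : ∀ y, B y (f y) = 0)
    (Δt : ℝ) (x xh : Fin n → ℝ)
    (hstep : xh - x = Δt • f ((xh + x) / 2)) :
    B xh xh = B x x := by
  set m := (xh + x) / 2 with hm
  have hsum : xh + x = (2 : ℝ) • m := by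
    rw [hm]; ext i; simp [Pi.div_apply]; ring
  have key : B (xh - x) (xh + x) = 0 := by
    rw [hstep, hsum]
    simp only [map_smul, LinearMap.smul_apply, smul_eq_mul]
    rw [hsymm, horth]
    ring
  have expand : B (xh - x) (xh + x) = B xh xh - B x x := by
    simp only [map_sub, map_add, LinearMap.sub_apply, LinearMap.add_apply]
    rw [hsymm x xh]
    ring
  linarith [key, expand.symm]
end

section
/- Consider the midpoint scheme applied to the fully extended n-body system: given a state (rᵢ, vᵢ, r_{ij}, ρ_{ij}) and a new state (r̂ᵢ, v̂ᵢ, r̂_{ij}, ρ̂_{ij}) satisfying x̂ − x = Δt F((x + x̂)/2) where F is the right-hand side of the extended system (with midpoint values of r_{ij} nonzero). Then ∑ᵢ mᵢ v̂ᵢ = ∑ᵢ mᵢ vᵢ. -/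
/-- One step of the midpoint scheme for the fully extended n-body system preserves
the total momentum `∑ᵢ mᵢ vᵢ`. -/
theorem stmt14 (n : ℕ) (γ Δt : ℝ) (hγ : 0 < γ)
    (m : Fin n → ℝ) (hm : ∀ i, 0 < m i)
    (r v rh vh rm vm : Fin n → EuclideanSpace ℝ (Fin 3))
    (R P Rh Ph Rm Pm : Fin n → Fin n → ℝ)
    (hRsymm : ∀ i j, R i j = R j i) (hPsymm : ∀ i j, P i j = P j i)
    (hRhsymm : ∀ i j, Rh i j = Rh j i) (hPhsymm : ∀ i j, Ph i j = Ph j i)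
    (hrm : ∀ i, rm i = (2 : ℝ)⁻¹ • (r i + rh i))
    (hvm : ∀ i, vm i = (2 : ℝ)⁻¹ • (v i + vh i))
    (hRm : ∀ i j, Rm i j = (R i j + Rh i j) / 2)
    (hPm : ∀ i j, Pm i j = (P i j + Ph i j) / 2)
    (hRm0 : ∀ i j, i ≠ j → Rm i j ≠ 0)
    (hstep_r : ∀ i, rh i - r i = Δt • vm i)
    (hstep_v : ∀ i, m i • (vh i - v i) =
      Δt • ∑ j ∈ Finset.univ.erase i,
        ((γ * m i * m j * Pm i j) / (Rm i j) ^ 2) • (rm j - rm i))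
    (hstep_R : ∀ i j, i ≠ j → Rh i j - R i j =
      Δt * ((1 / Rm i j) * (inner ℝ (rm i - rm j) (vm i - vm j) : ℝ)))
    (hstep_P : ∀ i j, i ≠ j → Ph i j - P i j =
      Δt * (-(Pm i j / (Rm i j) ^ 2) * (inner ℝ (rm i - rm j) (vm i - vm j) : ℝ))) :
    ∑ i, m i • vh i = ∑ i, m i • v i := by
  have key : ∑ i, ∑ j ∈ Finset.univ.erase i,
      ((γ * m i * m j * Pm i j) / (Rm i j) ^ 2) • (rm j - rm i) = 0 := by
    have hanti : ∀ i j : Fin n,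
        ((γ * m i * m j * Pm i j) / (Rm i j) ^ 2) • (rm j - rm i)
          = -(((γ * m j * m i * Pm j i) / (Rm j i) ^ 2) • (rm i - rm j)) := by
      intro i j
      have hP : Pm i j = Pm j i := by simp [hPm, hPsymm, hPhsymm]
      have hR : Rm i j = Rm j i := by simp [hRm, hRsymm, hRhsymm]
      rw [hP, hR, ← smul_neg, neg_sub]
      ring_nf
    have hS : (∑ i, ∑ j ∈ Finset.univ.erase i,
        ((γ * m i * m j * Pm i j) / (Rm i j) ^ 2) • (rm j - rm i))
        = ∑ p : Fin n × Fin n, (if p.1 ≠ p.2 then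
          ((γ * m p.1 * m p.2 * Pm p.1 p.2) / (Rm p.1 p.2) ^ 2) • (rm p.2 - rm p.1) else 0) := by
      rw [Fintype.sum_prod_type]
      refine Finset.sum_congr rfl fun i _ => ?_
      rw [← Finset.sum_filter]
      refine Finset.sum_congr ?_ fun j _ => rfl
      ext j
      simp [Finset.mem_erase, ne_comm, eq_comm]
    have hneg : ∀ p : Fin n × Fin n, (if p.2 ≠ p.1 then
          ((γ * m p.2 * m p.1 * Pm p.2 p.1) / (Rm p.2 p.1) ^ 2) • (rm p.1 - rm p.2) else 0)
        = -(if p.1 ≠ p.2 then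
          ((γ * m p.1 * m p.2 * Pm p.1 p.2) / (Rm p.1 p.2) ^ 2) • (rm p.2 - rm p.1) else 0) := by
      intro ⟨i, j⟩
      by_cases h : i = j
      · simp [h]
      · rw [if_pos (Ne.symm h), if_pos h, hanti j i]
    have hswap : (∑ p : Fin n × Fin n, (if p.1 ≠ p.2 then
          ((γ * m p.1 * m p.2 * Pm p.1 p.2) / (Rm p.1 p.2) ^ 2) • (rm p.2 - rm p.1) else 0))
        = ∑ p : Fin n × Fin n, (if p.2 ≠ p.1 then
          ((γ * m p.2 * m p.1 * Pm p.2 p.1) / (Rm p.2 p.1) ^ 2) • (rm p.1 - rm p.2) else 0) := by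
      exact Fintype.sum_equiv (Equiv.prodComm (Fin n) (Fin n)) _ _ (fun p => rfl)
    have h2 : (∑ i, ∑ j ∈ Finset.univ.erase i,
        ((γ * m i * m j * Pm i j) / (Rm i j) ^ 2) • (rm j - rm i))
        = -(∑ i, ∑ j ∈ Finset.univ.erase i,
        ((γ * m i * m j * Pm i j) / (Rm i j) ^ 2) • (rm j - rm i)) := by
      rw [hS]
      nth_rewrite 1 [hswap]
      rw [show (∑ p : Fin n × Fin n, (if p.2 ≠ p.1 then
          ((γ * m p.2 * m p.1 * Pm p.2 p.1) / (Rm p.2 p.1) ^ 2) • (rm p.1 - rm p.2) else 0))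
        = ∑ p : Fin n × Fin n, -(if p.1 ≠ p.2 then
          ((γ * m p.1 * m p.2 * Pm p.1 p.2) / (Rm p.1 p.2) ^ 2) • (rm p.2 - rm p.1) else 0)
        from Finset.sum_congr rfl fun p _ => hneg p]
      rw [Finset.sum_neg_distrib]
    have h3 := congrArg (fun x => x + (∑ i, ∑ j ∈ Finset.univ.erase i,
        ((γ * m i * m j * Pm i j) / (Rm i j) ^ 2) • (rm j - rm i))) h2
    simp only [neg_add_cancel] at h3
    rw [← two_smul ℝ] at h3
    rcases smul_eq_zero.mp h3 with h | h
    · norm_num at h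
    · exact h
  have hsub : ∑ i, m i • vh i - ∑ i, m i • v i = 0 := by
    rw [← Finset.sum_sub_distrib]
    have : ∀ i, m i • vh i - m i • v i = m i • (vh i - v i) := fun i => (smul_sub _ _ _).symm
    simp_rw [this, hstep_v, ← Finset.smul_sum, key, smul_zero]
  exact sub_eq_zero.mp hsub
end

section
/- Consider one step of the midpoint scheme for the fully extended n-body system (as above). Then for each pair i ≠ j: r̂_{ij} ρ̂_{ij} = r_{ij} ρ_{ij} and r̂_{ij}² − ‖r̂ᵢ − r̂ⱼ‖² = r_{ij}² − ‖rᵢ − rⱼ‖². -/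
/-- One step of the midpoint scheme for the fully extended n-body system preserves, for each
pair `i ≠ j`, the products `Rᵢⱼ ρᵢⱼ` and the differences `Rᵢⱼ² − ‖rᵢ − rⱼ‖²`. -/
theorem stmt15 (n : ℕ) (γ Δt : ℝ) (hγ : 0 < γ)
    (m : Fin n → ℝ) (hm : ∀ i, 0 < m i)
    (r v rh vh rm vm : Fin n → EuclideanSpace ℝ (Fin 3))
    (R P Rh Ph Rm Pm : Fin n → Fin n → ℝ)
    (hRsymm : ∀ i j, R i j = R j i) (hPsymm : ∀ i j, P i j = P j i)
    (hRhsymm : ∀ i j, Rh i j = Rh j i) (hPhsymm : ∀ i j, Ph i j = Ph j i)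
    (hrm : ∀ i, rm i = (2 : ℝ)⁻¹ • (r i + rh i))
    (hvm : ∀ i, vm i = (2 : ℝ)⁻¹ • (v i + vh i))
    (hRm : ∀ i j, Rm i j = (R i j + Rh i j) / 2)
    (hPm : ∀ i j, Pm i j = (P i j + Ph i j) / 2)
    (hRm0 : ∀ i j, i ≠ j → Rm i j ≠ 0)
    (hstep_r : ∀ i, rh i - r i = Δt • vm i)
    (hstep_v : ∀ i, m i • (vh i - v i) =
      Δt • ∑ j ∈ Finset.univ.erase i,
        ((γ * m i * m j * Pm i j) / (Rm i j) ^ 2) • (rm j - rm i))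
    (hstep_R : ∀ i j, i ≠ j → Rh i j - R i j =
      Δt * ((1 / Rm i j) * (inner ℝ (rm i - rm j) (vm i - vm j) : ℝ)))
    (hstep_P : ∀ i j, i ≠ j → Ph i j - P i j =
      Δt * (-(Pm i j / (Rm i j) ^ 2) * (inner ℝ (rm i - rm j) (vm i - vm j) : ℝ))) :
    ∀ i j, i ≠ j →
      Rh i j * Ph i j = R i j * P i j ∧
      (Rh i j) ^ 2 - ‖rh i - rh j‖ ^ 2 = (R i j) ^ 2 - ‖r i - r j‖ ^ 2 := by
  intro i j hij
  set S : ℝ := inner ℝ (rm i - rm j) (vm i - vm j) with hS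
  have hR0 := hRm0 i j hij
  have hRstep := hstep_R i j hij
  have hPstep := hstep_P i j hij
  rw [← hS] at hRstep hPstep
  have hRmval := hRm i j
  have hPmval := hPm i j
  constructor
  · -- Rh*Ph - R*P = (Rh-R)*Pm + (Ph-P)*Rm
    have key : Rh i j * Ph i j - R i j * P i j
        = (Rh i j - R i j) * Pm i j + (Ph i j - P i j) * Rm i j := by
      rw [hRmval, hPmval]; ring
    have : Rh i j * Ph i j - R i j * P i j = 0 := by
      rw [key, hRstep, hPstep]
      field_simp
      ring
    linarith
  · -- second identity
    have hnorm : ‖rh i - rh j‖ ^ 2 - ‖r i - r j‖ ^ 2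
        = inner ℝ ((rh i - rh j) + (r i - r j)) ((rh i - rh j) - (r i - r j)) := by
      generalize rh i - rh j = a
      generalize r i - r j = b
      rw [inner_add_left, inner_sub_right, inner_sub_right,
        real_inner_self_eq_norm_sq, real_inner_self_eq_norm_sq, real_inner_comm b a]
      ring
    have hsum : (rh i - rh j) + (r i - r j) = (2 : ℝ) • (rm i - rm j) := by
      rw [hrm i, hrm j]
      simp only [smul_sub, smul_add, smul_smul]
      norm_num
      abel
    have hdiff : (rh i - rh j) - (r i - r j) = Δt • (vm i - vm j) := by
      have h1 := hstep_r i
      have h2 := hstep_r j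
      rw [smul_sub, ← h1, ← h2]
      abel
    have hnorm2 : ‖rh i - rh j‖ ^ 2 - ‖r i - r j‖ ^ 2 = 2 * Δt * S := by
      rw [hnorm, hsum, hdiff, real_inner_smul_left, real_inner_smul_right, hS]
      ring
    have hRsq : Rh i j ^ 2 - R i j ^ 2 = 2 * Δt * S := by
      have : Rh i j ^ 2 - R i j ^ 2 = (Rh i j - R i j) * (2 * Rm i j) := by
        rw [hRmval]; ring
      rw [this, hRstep]
      field_simp
    linarith
end

section
/- Consider one step of the midpoint scheme for the fully extended n-body system. Then the quadratic energy is preserved: ∑ᵢ (mᵢ/2)‖v̂ᵢ‖² − γ ∑_{i<j} mᵢ mⱼ ρ̂_{ij} = ∑ᵢ (mᵢ/2)‖vᵢ‖² − γ ∑_{i<j} mᵢ mⱼ ρ_{ij}. -/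
lemma pairSum {n : ℕ} (f : Fin n → Fin n → ℝ) :
    ∑ i, ∑ j ∈ Finset.univ.erase i, f i j
      = ∑ i, ∑ j ∈ Finset.univ.filter (fun j => i < j), (f i j + f j i) := by
  have h1 : ∀ i : Fin n, ∑ j ∈ Finset.univ.erase i, f i j
      = ∑ j : Fin n, if i ≠ j then f i j else 0 := by
    intro i
    rw [← Finset.sum_filter]
    apply Finset.sum_congr _ (fun _ _ => rfl)
    ext j; simp [ne_comm]
  have h2 : ∀ i : Fin n, ∑ j ∈ Finset.univ.filter (fun j => i < j), (f i j + f j i)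
      = ∑ j : Fin n, ((if i < j then f i j else 0) + (if i < j then f j i else 0)) := by
    intro i
    rw [Finset.sum_filter]
    refine Finset.sum_congr rfl fun j _ => ?_
    split <;> simp
  simp only [h1, h2, Finset.sum_add_distrib]
  have h3 : ∑ i : Fin n, ∑ j : Fin n, (if i < j then f j i else 0)
      = ∑ i : Fin n, ∑ j : Fin n, (if j < i then f i j else 0) := by
    rw [Finset.sum_comm]
  rw [h3, ← Finset.sum_add_distrib]
  refine Finset.sum_congr rfl fun i _ => ?_
  rw [← Finset.sum_add_distrib]
  refine Finset.sum_congr rfl fun j _ => ?_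
  rcases lt_trichotomy i j with h | h | h
  · simp [h, not_lt.mpr h.le, h.ne]
  · simp [h]
  · simp [h, not_lt.mpr h.le, h.ne']

/-- One step of the midpoint scheme for the fully extended n-body system preserves the
quadratic energy `∑ᵢ (mᵢ/2)‖vᵢ‖² − γ ∑_{i<j} mᵢ mⱼ ρᵢⱼ`. -/
theorem stmt16 (n : ℕ) (γ Δt : ℝ) (hγ : 0 < γ)
    (m : Fin n → ℝ) (hm : ∀ i, 0 < m i)
    (r v rh vh rm vm : Fin n → EuclideanSpace ℝ (Fin 3))
    (R P Rh Ph Rm Pm : Fin n → Fin n → ℝ)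
    (hRsymm : ∀ i j, R i j = R j i) (hPsymm : ∀ i j, P i j = P j i)
    (hRhsymm : ∀ i j, Rh i j = Rh j i) (hPhsymm : ∀ i j, Ph i j = Ph j i)
    (hrm : ∀ i, rm i = (2 : ℝ)⁻¹ • (r i + rh i))
    (hvm : ∀ i, vm i = (2 : ℝ)⁻¹ • (v i + vh i))
    (hRm : ∀ i j, Rm i j = (R i j + Rh i j) / 2)
    (hPm : ∀ i j, Pm i j = (P i j + Ph i j) / 2)
    (hRm0 : ∀ i j, i ≠ j → Rm i j ≠ 0)
    (hstep_r : ∀ i, rh i - r i = Δt • vm i)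
    (hstep_v : ∀ i, m i • (vh i - v i) =
      Δt • ∑ j ∈ Finset.univ.erase i,
        ((γ * m i * m j * Pm i j) / (Rm i j) ^ 2) • (rm j - rm i))
    (hstep_R : ∀ i j, i ≠ j → Rh i j - R i j =
      Δt * ((1 / Rm i j) * (inner ℝ (rm i - rm j) (vm i - vm j) : ℝ)))
    (hstep_P : ∀ i j, i ≠ j → Ph i j - P i j =
      Δt * (-(Pm i j / (Rm i j) ^ 2) * (inner ℝ (rm i - rm j) (vm i - vm j) : ℝ))) :
    (∑ i, (m i / 2) * ‖vh i‖ ^ 2)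
      - γ * ∑ i, ∑ j ∈ Finset.univ.filter (fun j => i < j), m i * m j * Ph i j
    = (∑ i, (m i / 2) * ‖v i‖ ^ 2)
      - γ * ∑ i, ∑ j ∈ Finset.univ.filter (fun j => i < j), m i * m j * P i j := by
  -- symmetry of midpoint quantities
  have hRmsymm : ∀ i j, Rm i j = Rm j i := fun i j => by
    rw [hRm, hRm, hRsymm, hRhsymm]
  have hPmsymm : ∀ i j, Pm i j = Pm j i := fun i j => by
    rw [hPm, hPm, hPsymm, hPhsymm]
  -- kinetic energy change per particle
  set f : Fin n → Fin n → ℝ := fun i j =>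
    Δt * (γ * m i * m j * Pm i j / (Rm i j) ^ 2) * (inner ℝ (rm j - rm i) (vm i) : ℝ) with hf
  have hKE : ∀ i, (m i / 2) * ‖vh i‖ ^ 2 - (m i / 2) * ‖v i‖ ^ 2
      = ∑ j ∈ Finset.univ.erase i, f i j := by
    intro i
    have h1 : (inner ℝ (m i • (vh i - v i)) (vm i) : ℝ)
        = (m i / 2) * ‖vh i‖ ^ 2 - (m i / 2) * ‖v i‖ ^ 2 := by
      rw [hvm, real_inner_smul_left, real_inner_smul_right, inner_sub_left,
        inner_add_right, inner_add_right, real_inner_self_eq_norm_sq,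
        real_inner_self_eq_norm_sq, real_inner_comm (v i) (vh i)]
      ring
    rw [← h1, hstep_v i, real_inner_smul_left, sum_inner, Finset.mul_sum]
    refine Finset.sum_congr rfl fun j hj => ?_
    rw [real_inner_smul_left, hf]
    ring
  have hKEsum : (∑ i, (m i / 2) * ‖vh i‖ ^ 2) - (∑ i, (m i / 2) * ‖v i‖ ^ 2)
      = ∑ i, ∑ j ∈ Finset.univ.filter (fun j => i < j), (f i j + f j i) := by
    rw [← Finset.sum_sub_distrib, ← pairSum]
    exact Finset.sum_congr rfl fun i _ => hKE i
  -- potential change matches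
  have hmatch : ∀ i j : Fin n, i < j →
      f i j + f j i = γ * (m i * m j * Ph i j) - γ * (m i * m j * P i j) := by
    intro i j hij
    have hne : i ≠ j := hij.ne
    have hP := hstep_P i j hne
    have hinner : (inner ℝ (rm j - rm i) (vm i) : ℝ) + (inner ℝ (rm i - rm j) (vm j) : ℝ)
        = -(inner ℝ (rm i - rm j) (vm i - vm j) : ℝ) := by
      simp only [inner_sub_left, inner_sub_right]
      ring
    have : γ * (m i * m j * Ph i j) - γ * (m i * m j * P i j)
        = γ * m i * m j * (Ph i j - P i j) := by ring
    rw [this, hP, hf]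
    simp only []
    rw [hPmsymm j i, hRmsymm j i]
    linear_combination (Δt * (γ * m i * m j * Pm i j / Rm i j ^ 2)) * hinner
  have hPot : γ * (∑ i, ∑ j ∈ Finset.univ.filter (fun j => i < j), m i * m j * Ph i j)
      - γ * (∑ i, ∑ j ∈ Finset.univ.filter (fun j => i < j), m i * m j * P i j)
      = ∑ i, ∑ j ∈ Finset.univ.filter (fun j => i < j), (f i j + f j i) := by
    rw [Finset.mul_sum, Finset.mul_sum, ← Finset.sum_sub_distrib]
    refine Finset.sum_congr rfl fun i _ => ?_
    rw [Finset.mul_sum, Finset.mul_sum, ← Finset.sum_sub_distrib]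
    refine Finset.sum_congr rfl fun j hj => ?_
    exact (hmatch i j (Finset.mem_filter.mp hj).2).symm
  linarith [hKEsum, hPot]
end

section
/- Consider one step of the midpoint scheme for the fully extended 3-dimensional n-body system. Then the angular momentum is preserved: ∑ᵢ mᵢ (r̂ᵢ × v̂ᵢ) = ∑ᵢ mᵢ (rᵢ × vᵢ). -/
/-- The cross product on `EuclideanSpace ℝ (Fin 3)`. -/
noncomputable def cross3 (u w : EuclideanSpace ℝ (Fin 3)) : EuclideanSpace ℝ (Fin 3) :=
  (EuclideanSpace.equiv (Fin 3) ℝ).symm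
    (crossProduct (EuclideanSpace.equiv (Fin 3) ℝ u) (EuclideanSpace.equiv (Fin 3) ℝ w))

lemma cross3_add_left (u v w : EuclideanSpace ℝ (Fin 3)) :
    cross3 (u + v) w = cross3 u w + cross3 v w := by
  simp [cross3, map_add]

lemma cross3_add_right (u v w : EuclideanSpace ℝ (Fin 3)) :
    cross3 u (v + w) = cross3 u v + cross3 u w := by
  simp [cross3, map_add]

lemma cross3_smul_left (s : ℝ) (u w : EuclideanSpace ℝ (Fin 3)) :
    cross3 (s • u) w = s • cross3 u w := by
  simp [cross3, map_smul]

lemma cross3_smul_right (s : ℝ) (u w : EuclideanSpace ℝ (Fin 3)) :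
    cross3 u (s • w) = s • cross3 u w := by
  simp [cross3, map_smul]

lemma cross3_self (u : EuclideanSpace ℝ (Fin 3)) : cross3 u u = 0 := by
  simp [cross3, cross_self]

lemma cross3_anticomm (u w : EuclideanSpace ℝ (Fin 3)) : cross3 u w = - cross3 w u := by
  unfold cross3
  rw [← cross_anticomm, map_neg]

lemma cross3_sub_left (u v w : EuclideanSpace ℝ (Fin 3)) :
    cross3 (u - v) w = cross3 u w - cross3 v w := by
  simp [cross3, map_sub]

lemma cross3_sub_right (u v w : EuclideanSpace ℝ (Fin 3)) :
    cross3 u (v - w) = cross3 u v - cross3 u w := by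
  simp [cross3, map_sub]

lemma cross3_zero_right (u : EuclideanSpace ℝ (Fin 3)) : cross3 u 0 = 0 := by
  simp [cross3]

lemma cross3_sum_right {α : Type*} (s : Finset α) (u : EuclideanSpace ℝ (Fin 3))
    (g : α → EuclideanSpace ℝ (Fin 3)) :
    cross3 u (∑ j ∈ s, g j) = ∑ j ∈ s, cross3 u (g j) := by
  induction s using Finset.cons_induction with
  | empty => simp [cross3_zero_right]
  | cons a t h ih => simp [Finset.sum_cons, cross3_add_right, ih]

/-- One step of the midpoint scheme for the fully extended n-body system preserves the
angular momentum `∑ᵢ mᵢ (rᵢ × vᵢ)`. -/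
theorem stmt17 (n : ℕ) (γ Δt : ℝ) (hγ : 0 < γ)
    (m : Fin n → ℝ) (hm : ∀ i, 0 < m i)
    (r v rh vh rm vm : Fin n → EuclideanSpace ℝ (Fin 3))
    (R P Rh Ph Rm Pm : Fin n → Fin n → ℝ)
    (hRsymm : ∀ i j, R i j = R j i) (hPsymm : ∀ i j, P i j = P j i)
    (hRhsymm : ∀ i j, Rh i j = Rh j i) (hPhsymm : ∀ i j, Ph i j = Ph j i)
    (hrm : ∀ i, rm i = (2 : ℝ)⁻¹ • (r i + rh i))
    (hvm : ∀ i, vm i = (2 : ℝ)⁻¹ • (v i + vh i))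
    (hRm : ∀ i j, Rm i j = (R i j + Rh i j) / 2)
    (hPm : ∀ i j, Pm i j = (P i j + Ph i j) / 2)
    (hRm0 : ∀ i j, i ≠ j → Rm i j ≠ 0)
    (hstep_r : ∀ i, rh i - r i = Δt • vm i)
    (hstep_v : ∀ i, m i • (vh i - v i) =
      Δt • ∑ j ∈ Finset.univ.erase i,
        ((γ * m i * m j * Pm i j) / (Rm i j) ^ 2) • (rm j - rm i))
    (hstep_R : ∀ i j, i ≠ j → Rh i j - R i j =
      Δt * ((1 / Rm i j) * (inner ℝ (rm i - rm j) (vm i - vm j) : ℝ)))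
    (hstep_P : ∀ i j, i ≠ j → Ph i j - P i j =
      Δt * (-(Pm i j / (Rm i j) ^ 2) * (inner ℝ (rm i - rm j) (vm i - vm j) : ℝ))) :
    ∑ i, m i • cross3 (rh i) (vh i) = ∑ i, m i • cross3 (r i) (v i) := by
  set f : Fin n → Fin n → EuclideanSpace ℝ (Fin 3) :=
    fun i j => ((γ * m i * m j * Pm i j) / (Rm i j) ^ 2) • cross3 (rm i) (rm j) with hf
  have key : ∀ i, m i • cross3 (rh i) (vh i) - m i • cross3 (r i) (v i)
      = Δt • ∑ j ∈ Finset.univ.erase i, f i j := by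
    intro i
    have hdecomp : cross3 (rh i) (vh i) - cross3 (r i) (v i)
        = cross3 (rh i - r i) (vm i) + cross3 (rm i) (vh i - v i) := by
      rw [hrm, hvm]
      simp only [cross3_add_left, cross3_add_right, cross3_sub_left, cross3_sub_right,
        cross3_smul_left, cross3_smul_right]
      module
    have h1 : cross3 (rh i - r i) (vm i) = 0 := by
      rw [hstep_r i, cross3_smul_left, cross3_self, smul_zero]
    have h2 : m i • cross3 (rm i) (vh i - v i) = cross3 (rm i) (m i • (vh i - v i)) := by
      rw [cross3_smul_right]
    calc m i • cross3 (rh i) (vh i) - m i • cross3 (r i) (v i)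
        = m i • (cross3 (rh i) (vh i) - cross3 (r i) (v i)) := by rw [smul_sub]
      _ = m i • (cross3 (rh i - r i) (vm i) + cross3 (rm i) (vh i - v i)) := by rw [hdecomp]
      _ = cross3 (rm i) (m i • (vh i - v i)) := by rw [smul_add, h1, smul_zero, zero_add, h2]
      _ = Δt • ∑ j ∈ Finset.univ.erase i, f i j := by
          rw [hstep_v i, cross3_smul_right]
          congr 1
          rw [cross3_sum_right]
          refine Finset.sum_congr rfl fun j _ => ?_
          rw [cross3_smul_right, cross3_sub_right, cross3_self, sub_zero, hf]
  -- antisymmetry of f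
  have hfanti : ∀ i j, f i j = - f j i := by
    intro i j
    have hPm' : Pm i j = Pm j i := by rw [hPm, hPm, hPsymm, hPhsymm]
    have hRm' : Rm i j = Rm j i := by rw [hRm, hRm, hRsymm, hRhsymm]
    rw [hf]
    simp only
    rw [cross3_anticomm (rm i) (rm j), smul_neg, hPm', hRm']
    ring_nf
  -- the double sum vanishes
  have hS : ∑ i, ∑ j ∈ Finset.univ.erase i, f i j = 0 := by
    have hswap : ∑ i, ∑ j ∈ Finset.univ.erase i, f i j
        = ∑ j, ∑ i ∈ Finset.univ.erase j, f i j := by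
      apply Finset.sum_comm'
      intro i j
      simp [Finset.mem_erase, ne_comm, and_comm, eq_comm]
    have hneg : ∑ i, ∑ j ∈ Finset.univ.erase i, f i j
        = - ∑ i, ∑ j ∈ Finset.univ.erase i, f i j := by
      conv_lhs => rw [hswap]
      rw [← Finset.sum_neg_distrib]
      refine Finset.sum_congr rfl fun j _ => ?_
      rw [← Finset.sum_neg_distrib]
      exact Finset.sum_congr rfl fun i _ => by rw [hfanti i j]
    have h2 : (2 : ℝ) • ∑ i, ∑ j ∈ Finset.univ.erase i, f i j = 0 := by
      rw [two_smul]
      nth_rewrite 1 [hneg]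
      exact neg_add_cancel _
    have := congrArg (fun x => (2 : ℝ)⁻¹ • x) h2
    simpa [smul_smul] using this
  have : ∑ i, (m i • cross3 (rh i) (vh i) - m i • cross3 (r i) (v i)) = 0 := by
    calc ∑ i, (m i • cross3 (rh i) (vh i) - m i • cross3 (r i) (v i))
        = ∑ i, Δt • ∑ j ∈ Finset.univ.erase i, f i j :=
          Finset.sum_congr rfl fun i _ => key i
      _ = Δt • ∑ i, ∑ j ∈ Finset.univ.erase i, f i j := by rw [Finset.smul_sum]
      _ = 0 := by rw [hS, smul_zero]
  rw [Finset.sum_sub_distrib] at this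
  exact sub_eq_zero.mp this
end
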